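/- (Bogolyubov-type lemma) Let h : 𝔽₂ⁿ → {0,1} with 𝔼h ≥ ρ, and let K = {α : |ĥ(α)| ≥ ρ^{3/2}/2}. Let V = {x ∈ 𝔽₂ⁿ : ⟨α, x⟩ = 0 for all α ∈ K}. Then |K| ≤ 4ρ^{-3}, so V has codimension at most 4ρ^{-3}, and for every x ∈ V, the 4-fold convolution satisfies h∗h∗h∗h(x) ≥ ρ⁴/2 > 0. -/

import Mathlib

open Finset Matrix

noncomputable def chi : ZMod 2 → ℝ := fun a => (-1 : ℝ) ^ a.val

lemma chi_zero : chi 0 = 1 := by simp [chi]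

lemma chi_one' : chi 1 = -1 := by
  have : ZMod.val (1 : ZMod 2) = 1 := rfl
  simp [chi, this]

lemma zmod2_cases (a : ZMod 2) : a = 0 ∨ a = 1 := by
  revert a; decide

lemma chi_add (a b : ZMod 2) : chi (a + b) = chi a * chi b := by
  have h2 : (1 + 1 : ZMod 2) = 0 := by decide
  rcases zmod2_cases a with ha | ha <;> rcases zmod2_cases b with hb | hb <;>
    subst ha <;> subst hb <;> simp [chi_zero, chi_one', h2]

lemma chi_abs (a : ZMod 2) : |chi a| = 1 := by
  rcases zmod2_cases a with ha | ha <;> subst ha <;> simp [chi_zero, chi_one']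

lemma zmod2_neg (a : ZMod 2) : -a = a := by revert a; decide

lemma chi_sq (a : ZMod 2) : chi a * chi a = 1 := by
  rcases zmod2_cases a with ha | ha <;> subst ha <;> simp [chi_zero, chi_one']

noncomputable def fhat {n : ℕ} (h : (Fin n → ZMod 2) → ℝ) (α : Fin n → ZMod 2) : ℝ :=
  (∑ x : Fin n → ZMod 2, h x * chi (dotProduct α x))
    / (Fintype.card (Fin n → ZMod 2) : ℝ)

noncomputable def conv {n : ℕ} (g h : (Fin n → ZMod 2) → ℝ) : (Fin n → ZMod 2) → ℝ :=
  fun x => (∑ y : Fin n → ZMod 2, g y * h (x - y)) / (Fintype.card (Fin n → ZMod 2) : ℝ)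

variable {n : ℕ}

lemma cardG_pos : (0 : ℝ) < (Fintype.card (Fin n → ZMod 2) : ℝ) := by
  exact_mod_cast Fintype.card_pos

lemma sum_chi_ne {α : Fin n → ZMod 2} (hα : α ≠ 0) :
    ∑ x : Fin n → ZMod 2, chi (α ⬝ᵥ x) = 0 := by
  obtain ⟨i, hi⟩ : ∃ i, α i ≠ 0 := by
    by_contra hc; push_neg at hc; exact hα (funext hc)
  have hi1 : α i = 1 := (zmod2_cases (α i)).resolve_left hi
  set v : Fin n → ZMod 2 := Pi.single i 1 with hv
  have hdv : α ⬝ᵥ v = 1 := by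
    rw [hv, dotProduct_single, hi1, mul_one]
  have key : ∑ x : Fin n → ZMod 2, chi (α ⬝ᵥ (x + v))
      = ∑ x : Fin n → ZMod 2, chi (α ⬝ᵥ x) :=
    Equiv.sum_comp (Equiv.addRight v) (fun x => chi (α ⬝ᵥ x))
  have key2 : ∀ x : Fin n → ZMod 2, chi (α ⬝ᵥ (x + v)) = - chi (α ⬝ᵥ x) := by
    intro x
    rw [dotProduct_add, chi_add, hdv, chi_one']
    ring
  simp only [key2, Finset.sum_neg_distrib] at key
  linarith [key]

lemma sum_chi (α : Fin n → ZMod 2) :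
    ∑ x : Fin n → ZMod 2, chi (α ⬝ᵥ x)
      = if α = 0 then (Fintype.card (Fin n → ZMod 2) : ℝ) else 0 := by
  by_cases hα : α = 0
  · subst hα
    simp [zero_dotProduct, chi_zero]
  · rw [if_neg hα]; exact sum_chi_ne hα

lemma addself (x : Fin n → ZMod 2) : x + x = 0 := by
  funext i
  exact (by decide : ∀ a : ZMod 2, a + a = 0) (x i)

lemma eq_of_add_eq_zero' {y x : Fin n → ZMod 2} (hc : y + x = 0) : y = x := by
  have := congrArg (· + x) hc
  simpa [add_assoc, addself] using this

lemma inversion (f : (Fin n → ZMod 2) → ℝ) (x : Fin n → ZMod 2) :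
    ∑ α : Fin n → ZMod 2, fhat f α * chi (α ⬝ᵥ x) = f x := by
  have hN0 : (Fintype.card (Fin n → ZMod 2) : ℝ) ≠ 0 := ne_of_gt cardG_pos
  have step : ∀ α : Fin n → ZMod 2, fhat f α * chi (α ⬝ᵥ x)
      = (∑ y : Fin n → ZMod 2, f y * chi (α ⬝ᵥ (y + x)))
          / (Fintype.card (Fin n → ZMod 2) : ℝ) := by
    intro α
    rw [fhat, div_mul_eq_mul_div, Finset.sum_mul]
    congr 1
    refine Finset.sum_congr rfl fun y _ => ?_
    rw [dotProduct_add, chi_add, mul_assoc]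
  rw [Finset.sum_congr rfl (fun α _ => step α), ← Finset.sum_div, Finset.sum_comm]
  have key : ∀ y : Fin n → ZMod 2,
      ∑ α : Fin n → ZMod 2, f y * chi (α ⬝ᵥ (y + x))
      = if y = x then f y * (Fintype.card (Fin n → ZMod 2) : ℝ) else 0 := by
    intro y
    rw [← Finset.mul_sum]
    have h1 : ∑ α : Fin n → ZMod 2, chi (α ⬝ᵥ (y + x))
        = if y + x = 0 then (Fintype.card (Fin n → ZMod 2) : ℝ) else 0 := by
      rw [Finset.sum_congr rfl fun α _ => by rw [dotProduct_comm]]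
      exact sum_chi (y + x)
    rw [h1]
    have hiff : (y + x = 0) ↔ (y = x) :=
      ⟨eq_of_add_eq_zero', fun hc => by rw [hc]; exact addself x⟩
    by_cases hyx : y = x
    · rw [if_pos (hiff.mpr hyx), if_pos hyx]
    · rw [if_neg (fun hc => hyx (hiff.mp hc)), if_neg hyx, mul_zero]
  rw [Finset.sum_congr rfl (fun y _ => key y), Finset.sum_ite_eq' Finset.univ x,
    if_pos (Finset.mem_univ x), mul_div_assoc, div_self hN0, mul_one]

lemma sum_eq_fhat (f : (Fin n → ZMod 2) → ℝ) (α : Fin n → ZMod 2) :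
    ∑ x : Fin n → ZMod 2, f x * chi (α ⬝ᵥ x)
      = (Fintype.card (Fin n → ZMod 2) : ℝ) * fhat f α := by
  rw [fhat, mul_div_cancel₀ _ (ne_of_gt cardG_pos)]

lemma conv_fhat (g f : (Fin n → ZMod 2) → ℝ) (α : Fin n → ZMod 2) :
    fhat (conv g f) α = fhat g α * fhat f α := by
  have hN0 : (Fintype.card (Fin n → ZMod 2) : ℝ) ≠ 0 := ne_of_gt cardG_pos
  have inner : ∀ y : Fin n → ZMod 2,
      ∑ x : Fin n → ZMod 2, f (x - y) * chi (α ⬝ᵥ x)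
        = chi (α ⬝ᵥ y) * ((Fintype.card (Fin n → ZMod 2) : ℝ) * fhat f α) := by
    intro y
    have e := Equiv.sum_comp (Equiv.addRight y) (fun x => f (x - y) * chi (α ⬝ᵥ x))
    rw [← e]
    have : ∀ z : Fin n → ZMod 2,
        f ((Equiv.addRight y) z - y) * chi (α ⬝ᵥ ((Equiv.addRight y) z))
          = (f z * chi (α ⬝ᵥ z)) * chi (α ⬝ᵥ y) := by
      intro z
      show f (z + y - y) * chi (α ⬝ᵥ (z + y)) = _
      rw [add_sub_cancel_right, dotProduct_add, chi_add]
      ring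
    rw [Finset.sum_congr rfl (fun z _ => this z), ← Finset.sum_mul, sum_eq_fhat]
    ring
  rw [fhat]
  have main : ∑ x : Fin n → ZMod 2, conv g f x * chi (α ⬝ᵥ x)
      = (∑ y : Fin n → ZMod 2, g y *
          (chi (α ⬝ᵥ y) * ((Fintype.card (Fin n → ZMod 2) : ℝ) * fhat f α)))
        / (Fintype.card (Fin n → ZMod 2) : ℝ) := by
    simp only [conv, div_mul_eq_mul_div, ← Finset.sum_div]
    congr 1
    have : ∀ x : Fin n → ZMod 2,
        (∑ y : Fin n → ZMod 2, g y * f (x - y)) * chi (α ⬝ᵥ x)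
          = ∑ y : Fin n → ZMod 2, g y * (f (x - y) * chi (α ⬝ᵥ x)) := by
      intro x; rw [Finset.sum_mul]; exact Finset.sum_congr rfl fun y _ => mul_assoc _ _ _
    rw [Finset.sum_congr rfl (fun x _ => this x), Finset.sum_comm]
    refine Finset.sum_congr rfl fun y _ => ?_
    rw [← Finset.mul_sum, inner y]
  rw [main]
  have : ∑ y : Fin n → ZMod 2, g y *
      (chi (α ⬝ᵥ y) * ((Fintype.card (Fin n → ZMod 2) : ℝ) * fhat f α))
      = ((Fintype.card (Fin n → ZMod 2) : ℝ) * fhat g α) *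
        ((Fintype.card (Fin n → ZMod 2) : ℝ) * fhat f α) := by
    rw [← sum_eq_fhat g α, Finset.sum_mul]
    exact Finset.sum_congr rfl fun y _ => by ring
  rw [this]
  field_simp

lemma parseval (h : (Fin n → ZMod 2) → ℝ) :
    ∑ α : Fin n → ZMod 2, (fhat h α) ^ 2
      = (∑ y : Fin n → ZMod 2, h y * h y) / (Fintype.card (Fin n → ZMod 2) : ℝ) := by
  have h1 := inversion (conv h h) 0
  have h2 : ∀ α : Fin n → ZMod 2,
      fhat (conv h h) α * chi (α ⬝ᵥ (0 : Fin n → ZMod 2)) = (fhat h α) ^ 2 := by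
    intro α
    rw [conv_fhat, dotProduct_zero, chi_zero, mul_one]; ring
  rw [Finset.sum_congr rfl fun α _ => h2 α] at h1
  rw [h1, conv]
  congr 1
  refine Finset.sum_congr rfl fun y _ => ?_
  congr 1
  rw [zero_sub]
  congr 1
  funext i; exact zmod2_neg (y i)

lemma conv4_eq (h : (Fin n → ZMod 2) → ℝ) (x : Fin n → ZMod 2) :
    conv (conv (conv h h) h) h x
      = ∑ α : Fin n → ZMod 2, (fhat h α) ^ 4 * chi (α ⬝ᵥ x) := by
  have h1 := inversion (conv (conv (conv h h) h) h) x
  have h2 : ∀ α : Fin n → ZMod 2,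
      fhat (conv (conv (conv h h) h) h) α = (fhat h α) ^ 4 := by
    intro α; rw [conv_fhat, conv_fhat, conv_fhat]; ring
  rw [← h1]
  exact Finset.sum_congr rfl fun α _ => by rw [h2]

theorem stmt_7 {n : ℕ} (ρ : ℝ) (hρ : 0 < ρ)
    (h : (Fin n → ZMod 2) → ℝ) (hval : ∀ x, h x = 0 ∨ h x = 1)
    (hmean : ρ ≤ (∑ x : Fin n → ZMod 2, h x) / (Fintype.card (Fin n → ZMod 2) : ℝ))
    (K : Set (Fin n → ZMod 2))
    (hK : K = {α | ρ ^ ((3 : ℝ) / 2) / 2 ≤ |fhat h α|})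
    (V : Set (Fin n → ZMod 2))
    (hV : V = {x | ∀ α ∈ K, dotProduct α x = 0}) :
    (K.ncard : ℝ) ≤ 4 / ρ ^ 3 ∧
    ∀ x ∈ V, ρ ^ 4 / 2 ≤ conv (conv (conv h h) h) h x ∧ 0 < conv (conv (conv h h) h) h x := by
  classical
  have hN0 : (0:ℝ) < (Fintype.card (Fin n → ZMod 2) : ℝ) := cardG_pos
  set μ : ℝ := (∑ x : Fin n → ZMod 2, h x) / (Fintype.card (Fin n → ZMod 2) : ℝ) with hμdef
  have hh0 : ∀ x, 0 ≤ h x := fun x => by rcases hval x with e|e <;> rw [e] <;> norm_num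
  have hh1 : ∀ x, h x ≤ 1 := fun x => by rcases hval x with e|e <;> rw [e] <;> norm_num
  have hμ1 : μ ≤ 1 := by
    rw [hμdef, div_le_one hN0]
    calc ∑ x : Fin n → ZMod 2, h x ≤ ∑ _x : Fin n → ZMod 2, (1:ℝ) :=
          Finset.sum_le_sum fun x _ => hh1 x
      _ = (Fintype.card (Fin n → ZMod 2) : ℝ) := by simp
  have hρμ : ρ ≤ μ := hmean
  have hμ0 : 0 < μ := lt_of_lt_of_le hρ hρμ
  have hρ1 : ρ ≤ 1 := le_trans hρμ hμ1
  have hP : ∑ α : Fin n → ZMod 2, (fhat h α)^2 = μ := by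
    rw [parseval, hμdef]
    congr 1
    refine Finset.sum_congr rfl fun y _ => ?_
    rcases hval y with e|e <;> rw [e] <;> ring
  have hfhat0 : fhat h 0 = μ := by
    rw [fhat, hμdef]
    congr 1
    exact Finset.sum_congr rfl fun x _ => by
      rw [zero_dotProduct, chi_zero, mul_one]
  set c : ℝ := ρ ^ ((3:ℝ)/2) / 2 with hcdef
  have hcpos : 0 < c := by
    rw [hcdef]; positivity
  have hc2 : c^2 = ρ^3 / 4 := by
    rw [hcdef, div_pow]
    congr 1
    · rw [← Real.rpow_natCast (ρ ^ ((3:ℝ)/2)) 2, ← Real.rpow_mul hρ.le]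
      norm_num
    · norm_num
  have hcρ : c ≤ ρ := by
    have h1 : ρ ^ ((3:ℝ)/2) ≤ ρ ^ (1:ℝ) :=
      Real.rpow_le_rpow_of_exponent_ge hρ hρ1 (by norm_num)
    rw [Real.rpow_one] at h1
    rw [hcdef]; linarith
  set KF : Finset (Fin n → ZMod 2) := Finset.univ.filter (fun α => c ≤ |fhat h α|)
    with hKFdef
  have hKco : K = ↑KF := by
    rw [hK, hKFdef]; ext α; simp [hcdef]
  have hKmem : ∀ α, α ∈ KF ↔ c ≤ |fhat h α| := by
    intro α; rw [hKFdef]; simp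
  -- cardinality bound
  have hsum1 : (KF.card : ℝ) * (ρ^3/4) ≤ 1 := by
    have h1 : ∑ _α ∈ KF, (ρ^3/4) ≤ ∑ α ∈ KF, (fhat h α)^2 := by
      refine Finset.sum_le_sum fun α hα => ?_
      have hm := (hKmem α).mp hα
      calc ρ^3/4 = c^2 := hc2.symm
        _ ≤ |fhat h α|^2 := pow_le_pow_left₀ hcpos.le hm 2
        _ = (fhat h α)^2 := sq_abs _
    have h2 : ∑ α ∈ KF, (fhat h α)^2 ≤ ∑ α : Fin n → ZMod 2, (fhat h α)^2 :=
      Finset.sum_le_sum_of_subset_of_nonneg (Finset.subset_univ _)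
        (fun α _ _ => sq_nonneg _)
    rw [Finset.sum_const, nsmul_eq_mul] at h1
    rw [hP] at h2
    linarith
  have hρ3 : (0:ℝ) < ρ^3 := by positivity
  constructor
  · rw [hKco, Set.ncard_coe_finset, le_div_iff₀ hρ3]
    nlinarith [hsum1]
  · intro x hx
    have hx' : ∀ α ∈ K, α ⬝ᵥ x = 0 := by rw [hV] at hx; exact hx
    have hF4 := conv4_eq h x
    set F : (Fin n → ZMod 2) → ℝ := fun α => (fhat h α)^4 * chi (α ⬝ᵥ x) with hFdef
    have hsplit : ∑ α ∈ KF, F α + ∑ α ∈ Finset.univ.filter (fun α => ¬ (c ≤ |fhat h α|)), F α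
        = ∑ α : Fin n → ZMod 2, F α := by
      rw [hKFdef]
      exact Finset.sum_filter_add_sum_filter_not Finset.univ _ F
    -- bound on the K part
    have hAterm : ∀ α ∈ KF, F α = (fhat h α)^4 := by
      intro α hα
      have hαK : α ∈ K := by rw [hK]; exact (hKmem α).mp hα
      have : α ⬝ᵥ x = 0 := hx' α hαK
      rw [hFdef]; simp only
      rw [this, chi_zero, mul_one]
    have h0K : (0 : Fin n → ZMod 2) ∈ KF := by
      rw [hKmem, hfhat0, abs_of_nonneg hμ0.le]
      exact le_trans hcρ hρμ
    have hA : μ^4 ≤ ∑ α ∈ KF, F α := by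
      rw [Finset.sum_congr rfl hAterm]
      calc μ^4 = (fhat h 0)^4 := by rw [hfhat0]
        _ ≤ ∑ α ∈ KF, (fhat h α)^4 :=
          Finset.single_le_sum (f := fun α => (fhat h α)^4)
            (fun α _ => by positivity) h0K
    -- bound on the complement part
    have hB : |∑ α ∈ Finset.univ.filter (fun α => ¬ (c ≤ |fhat h α|)), F α| ≤ ρ^3/4 * μ := by
      calc |∑ α ∈ Finset.univ.filter (fun α => ¬ (c ≤ |fhat h α|)), F α|
          ≤ ∑ α ∈ Finset.univ.filter (fun α => ¬ (c ≤ |fhat h α|)), |F α| :=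
            Finset.abs_sum_le_sum_abs _ _
        _ ≤ ∑ α ∈ Finset.univ.filter (fun α => ¬ (c ≤ |fhat h α|)), ρ^3/4 * (fhat h α)^2 := by
            refine Finset.sum_le_sum fun α hα => ?_
            have hlt : |fhat h α| < c := lt_of_not_ge (Finset.mem_filter.mp hα).2
            have habs : |F α| = (fhat h α)^4 := by
              rw [hFdef]; simp only
              rw [abs_mul, chi_abs, mul_one, abs_of_nonneg (by positivity)]
            rw [habs]
            have h1 : (fhat h α)^2 ≤ c^2 := by
              rw [← sq_abs]
              exact pow_le_pow_left₀ (abs_nonneg _) hlt.le 2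
            nlinarith [h1, sq_nonneg (fhat h α), hc2]
        _ = ρ^3/4 * ∑ α ∈ Finset.univ.filter (fun α => ¬ (c ≤ |fhat h α|)), (fhat h α)^2 := by
            rw [Finset.mul_sum]
        _ ≤ ρ^3/4 * μ := by
            refine mul_le_mul_of_nonneg_left ?_ (by positivity)
            rw [← hP]
            exact Finset.sum_le_sum_of_subset_of_nonneg (Finset.subset_univ _)
              (fun α _ _ => sq_nonneg _)
    have hfinal : ρ^4/2 ≤ conv (conv (conv h h) h) h x := by
      rw [hF4, ← hsplit]
      have hμ3 : ρ^3 ≤ μ^3 := pow_le_pow_left₀ hρ.le hρμ 3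
      have hBlow : -(ρ^3/4 * μ) ≤ ∑ α ∈ Finset.univ.filter (fun α => ¬ (c ≤ |fhat h α|)), F α := by
        have := neg_abs_le (∑ α ∈ Finset.univ.filter (fun α => ¬ (c ≤ |fhat h α|)), F α)
        linarith
      nlinarith [hA, hBlow, mul_le_mul_of_nonneg_left hμ3 hμ0.le,
        mul_le_mul_of_nonneg_right hρμ hρ3.le]
    exact ⟨hfinal, lt_of_lt_of_le (by positivity) hfinal⟩
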